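/- Let X be a compact Hausdorff space and let F : ℝ × X → X satisfy F(0,x) = x and F(s+t,x) = F(s,F(t,x)) for all s,t ∈ ℝ and x ∈ X, with each map F(t,·) : X → X continuous. Assume moreover that for every continuous function f : X → ℂ the map t ↦ f∘F(t,·) is continuous from ℝ into the space C(X) of continuous functions on X equipped with the supremum norm. Then F is jointly continuous, i.e. if a net (tᵢ, xᵢ) converges to (t, x) in ℝ × X then F(tᵢ, xᵢ) converges to F(t,x). -/

import Mathlib

/-- A flow on a compact Hausdorff space all of whose time-`t` maps are continuous and whose
induced one-parameter group on `C(X)` is norm-continuous is jointly continuous. -/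
theorem stmt8 {X : Type*} [TopologicalSpace X] [CompactSpace X] [T2Space X]
    (F : ℝ × X → X)
    (h0 : ∀ x, F (0, x) = x)
    (hadd : ∀ s t x, F (s + t, x) = F (s, F (t, x)))
    (hFt : ∀ t : ℝ, Continuous fun x => F (t, x))
    (hstrong : ∀ f : C(X, ℂ),
      Continuous fun t : ℝ => f.comp ⟨fun x => F (t, x), hFt t⟩) :
    Continuous F := by
  -- Embed X into ∏_{f ∈ C(X,ℂ)} ℂ
  set e : X → (C(X, ℂ) → ℂ) := fun x f => f x with he
  have hecont : Continuous e := continuous_pi fun f => f.continuous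
  have hinj : Function.Injective e := by
    intro x y hxy
    by_contra hne
    obtain ⟨f, hf⟩ := exists_continuous_zero_one_of_isClosed (isClosed_singleton (x := x))
      (isClosed_singleton (x := y)) (by simp [Set.disjoint_singleton, hne])
    have h1 : (⟨Complex.ofReal, Complex.continuous_ofReal⟩ : C(ℝ,ℂ)).comp f x
        = (⟨Complex.ofReal, Complex.continuous_ofReal⟩ : C(ℝ,ℂ)).comp f y :=
      congrFun hxy _
    simp [hf.1 rfl, hf.2.1 rfl] at h1
  have hemb : Topology.IsInducing e := (hecont.isClosedEmbedding hinj).toIsInducing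
  rw [hemb.continuous_iff]
  apply continuous_pi
  intro f
  have : (fun p : ℝ × X => (e ∘ F) p f)
      = (fun p : C(X, ℂ) × X => p.1 p.2) ∘
        (fun p : ℝ × X => (f.comp ⟨fun x => F (p.1, x), hFt p.1⟩, p.2)) := by
    ext ⟨t, x⟩; rfl
  rw [this]
  exact continuous_eval.comp ((hstrong f).comp continuous_fst |>.prodMk continuous_snd)
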